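/- Let G and H be connected graphs and let Z be a subset of V(G) × V(H) that is gated in the Cartesian product G × H. Define X = {x ∈ V(G) : ∃y, (x,y) ∈ Z} and Y = {y ∈ V(H) : ∃x, (x,y) ∈ Z}. Then Z = X × Y. -/

import Mathlib

open SimpleGraph

/-- A nonempty vertex set `S` of a graph `G` is gated: every vertex `v` has a gate `g ∈ S`
lying on a shortest path from `v` to every member of `S`. -/
def Gated {V : Type*} (G : SimpleGraph V) (S : Set V) : Prop :=
  S.Nonempty ∧ ∀ v : V, ∃ g ∈ S, ∀ s ∈ S, G.dist v s = G.dist v g + G.dist g s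

private lemma walk_len_proj {α β : Type*} {G : SimpleGraph α} {H : SimpleGraph β}
    [DecidableEq α] [DecidableEq β] [DecidableRel G.Adj] [DecidableRel H.Adj] :
    ∀ {x y : α × β} (w : (G □ H).Walk x y),
      w.ofBoxProdLeft.length + w.ofBoxProdRight.length = w.length := by
  intro x y w
  induction w with
  | nil => simp [SimpleGraph.Walk.ofBoxProdLeft, SimpleGraph.Walk.ofBoxProdRight]
  | @cons u v z h w ih =>
    obtain ⟨u1, u2⟩ := u
    obtain ⟨v1, v2⟩ := v
    rcases h with hG | hH
    · have hnH : ¬ (H.Adj u2 v2 ∧ u1 = v1) := by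
        rintro ⟨-, h1⟩
        exact G.irrefl (h1 ▸ hG.1)
      obtain ⟨hG1, hG2⟩ := hG
      cases hG2
      unfold SimpleGraph.Walk.ofBoxProdLeft SimpleGraph.Walk.ofBoxProdRight
      rw [Or.by_cases, dif_pos ⟨hG1, rfl⟩, Or.by_cases, dif_neg hnH]
      simp only [SimpleGraph.Walk.length_cons]
      change _ = w.length + 1
      omega
    · have hnG : ¬ (G.Adj u1 v1 ∧ u2 = v2) := by
        rintro ⟨-, h1⟩
        exact H.irrefl (h1 ▸ hH.1)
      obtain ⟨hH1, hH2⟩ := hH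
      cases hH2
      unfold SimpleGraph.Walk.ofBoxProdLeft SimpleGraph.Walk.ofBoxProdRight
      rw [Or.by_cases, dif_neg hnG, Or.by_cases, dif_pos ⟨hH1, rfl⟩]
      simp only [SimpleGraph.Walk.length_cons]
      change _ = w.length + 1
      omega

private lemma boxProd_dist {α β : Type*} {G : SimpleGraph α} {H : SimpleGraph β}
    (hG : G.Connected) (hH : H.Connected) (x y : α × β) :
    (G □ H).dist x y = G.dist x.1 y.1 + H.dist x.2 y.2 := by
  classical
  apply le_antisymm
  · obtain ⟨w1, hw1⟩ := hG.exists_walk_length_eq_dist x.1 y.1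
    obtain ⟨w2, hw2⟩ := hH.exists_walk_length_eq_dist x.2 y.2
    calc (G □ H).dist x y ≤ ((w1.boxProdLeft H x.2).append (w2.boxProdRight G y.1)).length :=
          SimpleGraph.dist_le _
      _ = G.dist x.1 y.1 + H.dist x.2 y.2 := by
          rw [SimpleGraph.Walk.length_append]
          exact congrArg₂ (· + ·) ((SimpleGraph.Walk.length_map _ w1).trans hw1)
            ((SimpleGraph.Walk.length_map _ w2).trans hw2)
  · obtain ⟨w, hw⟩ := (hG.boxProd hH).exists_walk_length_eq_dist x y
    have h1 := SimpleGraph.dist_le w.ofBoxProdLeft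
    have h2 := SimpleGraph.dist_le w.ofBoxProdRight
    have := walk_len_proj w
    omega

theorem stmt2 {V W : Type*} (G : SimpleGraph V) (H : SimpleGraph W)
    (hG : G.Connected) (hH : H.Connected) (Z : Set (V × W))
    (hZ : Gated (G.boxProd H) Z) :
    Z = {x : V | ∃ y, (x, y) ∈ Z} ×ˢ {y : W | ∃ x, (x, y) ∈ Z} := by
  obtain ⟨hne, hgate⟩ := hZ
  ext ⟨x, y'⟩
  simp only [Set.mem_prod, Set.mem_setOf_eq]
  constructor
  · exact fun h => ⟨⟨y', h⟩, ⟨x, h⟩⟩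
  · rintro ⟨⟨y, hxy⟩, ⟨x', hx'y'⟩⟩
    obtain ⟨g, hgZ, hg⟩ := hgate (x, y')
    have h1 := hg (x, y) hxy
    have h2 := hg (x', y') hx'y'
    rw [boxProd_dist hG hH, boxProd_dist hG hH, boxProd_dist hG hH] at h1 h2
    simp only at h1 h2
    have t1 : H.dist y' y ≤ H.dist y' g.2 + H.dist g.2 y := hH.dist_triangle
    have t2 : G.dist x x' ≤ G.dist x g.1 + G.dist g.1 x' := hG.dist_triangle
    have e1 : G.dist x g.1 = 0 := by
      have := hG.dist_triangle (u := x) (v := g.1) (w := x)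
      simp only [SimpleGraph.dist_self] at *
      omega
    have e2 : H.dist y' g.2 = 0 := by
      have := hH.dist_triangle (u := y') (v := g.2) (w := y')
      simp only [SimpleGraph.dist_self] at *
      omega
    have hx : x = g.1 := (hG.dist_eq_zero_iff).mp e1
    have hy : y' = g.2 := (hH.dist_eq_zero_iff).mp e2
    rw [hx, hy]
    exact hgZ
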